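/- arXiv:2510.05737 — 2 statements merged into one kernel-verified Lean document; each statement's English description precedes it below -/
import Mathlib

section
/- Let ℓ ≥ 1, 0 ≤ m ≤ ℓ, and let t ≥ 1 be an integer. Then the q-expansion coefficients of the t-th power f_{12ℓ,m}^t of the Miller basis form f_{12ℓ,m} ∈ M_{12ℓ} and of the Miller basis form f_{12tℓ, tm} ∈ M_{12tℓ} agree in all degrees d ≤ tm + (ℓ − m); explicitly, f_{12ℓ,m}^t = q^{tm} + O(q^{ℓ + (t−1)m + 1}) and f_{12tℓ,tm} = q^{tm} + O(q^{tℓ+1}), so both have coefficient δ_{d,tm} for all d ≤ tm + (ℓ − m). -/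
open Complex Polynomial Real MeasureTheory Filter Topology

noncomputable section

/-- `q = e^{2πiz}`. -/
def qexp (z : ℂ) : ℂ := Complex.exp (2 * Real.pi * Complex.I * z)

/-- The normalized Eisenstein series `E_k(z) = (1/2) ∑_{gcd(c,d)=1} (cz+d)^{-k}`,
with the convention `E_0 = 1`. -/
def Eis (k : ℕ) (z : ℂ) : ℂ :=
  if k = 0 then 1
  else (1 / 2) * ∑' p : ℤ × ℤ, if Int.gcd p.1 p.2 = 1 then 1 / ((p.1 : ℂ) * z + (p.2 : ℂ)) ^ k else 0

/-- The modular discriminant `Δ(z) = q ∏_{n ≥ 1} (1 - q^n)^24`, `q = e^{2πiz}`. -/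
def Disc (z : ℂ) : ℂ := qexp z * ∏' n : ℕ, (1 - qexp z ^ (n + 1)) ^ 24

/-- The modular `j`-invariant `j = E₄³ / Δ`. -/
def jinv (z : ℂ) : ℂ := Eis 4 z ^ 3 / Disc z

/-- The coefficient of `q^d` in the Fourier/`q`-expansion of a `1`-periodic function
holomorphic on the upper half-plane, computed at height `1`. -/
def qCoeff (f : ℂ → ℂ) (d : ℤ) : ℂ :=
  ∫ x in (0:ℝ)..1,
    f (x + Complex.I) * Complex.exp (-(2 * Real.pi * Complex.I * d * (x + Complex.I)))

/-- `c_N(d)`: the coefficient of `q^d` in the Laurent expansion of `j^N`. -/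
def cj (N : ℕ) (d : ℤ) : ℂ := qCoeff (fun z => jinv z ^ N) d

/-- `A_n = (1/2π) ∫_{π/2}^{2π/3} j(e^{iθ})^n dθ`. -/
def Acoef (n : ℕ) : ℂ :=
  (1 / (2 * Real.pi)) *
    ∫ θ in (Real.pi / 2)..(2 * Real.pi / 3), jinv (Complex.exp (θ * Complex.I)) ^ n

/-- `B_n = -c_n(0)`, where `c_n(0)` is the coefficient of `q^0` in `j^n`. -/
def Bcoef (n : ℕ) : ℂ := - cj n 0

/-- `C_n(k') = 0` for `k' ∈ {0,4,8}` and `C_n(k') = -1728^n/2` for `k' ∈ {6,10,14}`. -/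
def Ccoef (n k' : ℕ) : ℂ := if k' = 6 ∨ k' = 10 ∨ k' = 14 then -(1728 : ℂ) ^ n / 2 else 0

/-- Real-valued version of `A_n` (recall `j` is real on the arc). -/
def AcoefR (n : ℕ) : ℝ :=
  (1 / (2 * Real.pi)) *
    ∫ θ in (Real.pi / 2)..(2 * Real.pi / 3), (jinv (Complex.exp (θ * Complex.I)) ^ n).re

/-- Real-valued version of `B_n = -c_n(0)` (recall `c_n(0)` is an integer). -/
def BcoefR (n : ℕ) : ℝ := - (cj n 0).re

/-- Real-valued version of `C_n(k')`. -/
def CcoefR (n k' : ℕ) : ℝ := if k' = 6 ∨ k' = 10 ∨ k' = 14 then -(1728 : ℝ) ^ n / 2 else 0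

/-- `f` is the `m`-th element `f_{k,m} = q^m + O(q^{ℓ+1})` of the Miller basis of `M_k`,
`k = 12ℓ + k'`: it is holomorphic on the upper half-plane, weight-`k` modular for
`SL₂(ℤ)`, and has a convergent `q`-expansion whose coefficients in degrees `≤ ℓ`
are `δ_{d,m}`. -/
def IsMillerForm (ℓ k' m : ℕ) (f : ℂ → ℂ) : Prop :=
  (∀ z : ℂ, 0 < z.im → DifferentiableAt ℂ f z) ∧
  (∀ z : ℂ, 0 < z.im → f (z + 1) = f z) ∧
  (∀ z : ℂ, 0 < z.im → f (-1 / z) = z ^ (12 * ℓ + k') * f z) ∧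
  (∃ a : ℕ → ℂ,
    (∀ z : ℂ, 0 < z.im →
      Summable (fun n : ℕ => a n * qexp z ^ n) ∧ f z = ∑' n : ℕ, a n * qexp z ^ n) ∧
    (∀ d : ℕ, d ≤ ℓ → a d = if d = m then 1 else 0))

/-- `F` is the Faber polynomial of `f = f_{k,m}`, `k = 12ℓ + k'`: the monic polynomial
of degree `ℓ - m` with `f = Δ^ℓ ⬝ E_{k'} ⬝ F(j)`. -/
def IsFaber (ℓ k' m : ℕ) (f : ℂ → ℂ) (F : Polynomial ℂ) : Prop :=
  F.Monic ∧ F.natDegree = ℓ - m ∧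
  ∀ z : ℂ, 0 < z.im → f z = Disc z ^ ℓ * Eis k' z * F.eval (jinv z)

/-- The sum of the `n`-th powers of the zeros of `F`, counted with multiplicity. -/
def powerSumRoots (F : Polynomial ℂ) (n : ℕ) : ℂ := (F.roots.map (fun x => x ^ n)).sum

/-- The (finite) solutions of `d_1 + 2 d_2 + ⋯ + n d_n = n` in nonnegative integers,
indexed by `Fin n` (so index `t : Fin n` stands for `d_{t+1}`).  Note any solution
automatically has `d_t ≤ n`. -/
def sols (n : ℕ) : Finset (Fin n → ℕ) :=
  (Fintype.piFinset fun _ : Fin n => Finset.range (n + 1)).filter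
    (fun d => ∑ t : Fin n, ((t : ℕ) + 1) * d t = n)

lemma qexp_surjOn {w : ℂ} (h0 : w ≠ 0) (h1 : ‖w‖ < 1) :
    ∃ z : ℂ, 0 < z.im ∧ qexp z = w := by
  have h2pi : (2 * (Real.pi : ℂ) * Complex.I) ≠ 0 := by
    simp [Real.pi_ne_zero, Complex.I_ne_zero]
  refine ⟨Complex.log w / (2 * Real.pi * Complex.I), ?_, ?_⟩
  · have hre : (Complex.log w).re < 0 := by
      rw [Complex.log_re]
      exact Real.log_neg (by simpa using norm_pos_iff.mpr h0)
        (by simpa using h1)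
    rw [Complex.div_im]
    simp only [Complex.mul_im, Complex.mul_re, Complex.I_re, Complex.I_im, Complex.ofReal_re,
      Complex.ofReal_im, Complex.re_ofNat, Complex.im_ofNat, Complex.normSq_apply]
    ring_nf
    nlinarith [mul_pos (mul_pos Real.pi_pos (pow_pos (inv_pos.mpr Real.pi_pos) 2))
      (neg_pos.mpr hre)]
  · unfold qexp
    rw [mul_comm, div_mul_cancel₀ _ h2pi, Complex.exp_log h0]

lemma qcoeff_unique (d : ℕ → ℂ)
    (h : ∀ z : ℂ, 0 < z.im →
      Summable (fun n : ℕ => d n * qexp z ^ n) ∧ (∑' n : ℕ, d n * qexp z ^ n) = 0) :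
    ∀ n, d n = 0 := by
  set D : ℂ → ℂ := fun w => ∑' n : ℕ, d n * w ^ n with hDdef
  have key : ∀ w : ℂ, ‖w‖ < 1 →
      Summable (fun n : ℕ => d n * w ^ n) ∧ (w ≠ 0 → D w = 0) := by
    intro w hw
    rcases eq_or_ne w 0 with rfl | hw0
    · refine ⟨summable_of_ne_finset_zero (s := {0}) fun n hn => ?_, by simp⟩
      simp [zero_pow (by simpa using hn)]
    · obtain ⟨z, hz, rfl⟩ := qexp_surjOn hw0 hw
      exact ⟨(h z hz).1, fun _ => (h z hz).2⟩
  have hsum12 : Summable fun n : ℕ => ‖d n‖ * (1 / 2 : ℝ) ^ n := by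
    have h1 := summable_norm_iff.mpr (key (1/2 : ℂ) (by norm_num)).1
    refine h1.congr fun n => ?_
    simp [norm_mul, norm_pow]
  have H : HasFPowerSeriesOnBall D (FormalMultilinearSeries.ofScalars ℂ d) 0
      ((1/2 : NNReal) : ENNReal) := by
    refine ⟨?_, by norm_num, ?_⟩
    · apply FormalMultilinearSeries.le_radius_of_summable
      refine hsum12.congr fun n => ?_
      rw [FormalMultilinearSeries.ofScalars_norm]
      push_cast
      ring
    · intro y hy
      have hy2 : ‖y‖₊ < (1/2 : NNReal) := by
        rw [EMetric.mem_ball, edist_zero_right] at hy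
        exact_mod_cast hy
      have hy' : ‖y‖ < 1 := by
        have h3 : ‖y‖ < ((1/2 : NNReal) : ℝ) := by exact_mod_cast hy2
        have h4 : ((1/2 : NNReal) : ℝ) = 1/2 := by push_cast; ring
        rw [h4] at h3
        linarith
      have hs : HasSum (fun n : ℕ => d n * y ^ n) (D y) := (key y hy').1.hasSum
      have happ : (fun n : ℕ => (FormalMultilinearSeries.ofScalars ℂ d n) fun _ => y)
          = fun n : ℕ => d n * y ^ n := by
        funext n
        rw [FormalMultilinearSeries.ofScalars_apply_eq, smul_eq_mul]
      rw [zero_add, happ]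
      exact hs
  have hball : ∀ᶠ w in 𝓝 (0:ℂ), ‖w‖ < 1 := by
    filter_upwards [Metric.ball_mem_nhds (0:ℂ) one_pos] with w hw
    simpa [mem_ball_zero_iff] using hw
  have hcont : ContinuousAt D 0 :=
    (H.continuousOn).continuousAt (EMetric.ball_mem_nhds 0 (by norm_num))
  have hD0 : D 0 = 0 := by
    have h1 : Tendsto D (𝓝[≠] (0:ℂ)) (𝓝 (D 0)) := hcont.tendsto.mono_left nhdsWithin_le_nhds
    have hevp : D =ᶠ[𝓝[≠] (0:ℂ)] (fun _ => 0) := by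
      show ∀ᶠ w in 𝓝[≠] (0:ℂ), D w = 0
      rw [eventually_nhdsWithin_iff]
      filter_upwards [hball] with w hw hne
      exact (key w hw).2 hne
    have h2 : Tendsto D (𝓝[≠] (0:ℂ)) (𝓝 (0:ℂ)) := tendsto_const_nhds.congr' hevp.symm
    exact tendsto_nhds_unique h1 h2
  have hev : D =ᶠ[𝓝 (0:ℂ)] 0 := by
    filter_upwards [hball] with w hw
    rcases eq_or_ne w 0 with rfl | hne
    · exact hD0
    · exact (key w hw).2 hne
  have hzero : FormalMultilinearSeries.ofScalars ℂ d = 0 :=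
    H.hasFPowerSeriesAt.eq_zero_of_eventually hev
  have hd := (FormalMultilinearSeries.ofScalars_series_eq_zero ℂ).mp hzero
  exact fun n => by simpa using congrFun hd n

lemma coeff_mul_q (u v : ℕ → ℂ) (z : ℂ)
    (hu : Summable fun n : ℕ => u n * qexp z ^ n)
    (hv : Summable fun n : ℕ => v n * qexp z ^ n) :
    Summable (fun n : ℕ =>
        (∑ kl ∈ Finset.HasAntidiagonal.antidiagonal n, u kl.1 * v kl.2) * qexp z ^ n) ∧
      (∑' n : ℕ, u n * qexp z ^ n) * (∑' n : ℕ, v n * qexp z ^ n)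
        = ∑' n : ℕ, (∑ kl ∈ Finset.HasAntidiagonal.antidiagonal n, u kl.1 * v kl.2) * qexp z ^ n := by
  have hu' := summable_norm_iff.mpr hu
  have hv' := summable_norm_iff.mpr hv
  have hterm : ∀ n : ℕ,
      (∑ kl ∈ Finset.HasAntidiagonal.antidiagonal n, (u kl.1 * qexp z ^ kl.1) * (v kl.2 * qexp z ^ kl.2))
        = (∑ kl ∈ Finset.HasAntidiagonal.antidiagonal n, u kl.1 * v kl.2) * qexp z ^ n := by
    intro n
    rw [Finset.sum_mul]
    refine Finset.sum_congr rfl fun kl hkl => ?_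
    rw [Finset.HasAntidiagonal.mem_antidiagonal] at hkl
    rw [← hkl, pow_add]
    ring
  constructor
  · have := (summable_norm_sum_mul_antidiagonal_of_summable_norm hu' hv').of_norm
    exact this.congr fun n => hterm n
  · rw [tsum_mul_tsum_eq_tsum_sum_antidiagonal_of_summable_norm hu' hv']
    exact tsum_congr hterm

/-- For `ℓ ≥ 1`, `0 ≤ m ≤ ℓ`, `t ≥ 1`, the `q`-expansion
coefficients of `f_{12ℓ,m}^t` and of `f_{12tℓ,tm}` agree in all degrees
`d ≤ tm + (ℓ - m)`, and both equal `δ_{d,tm}` there. -/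
theorem power_coeffs_agree (ℓ m t : ℕ) (hℓ : 1 ≤ ℓ) (hm : m ≤ ℓ) (ht : 1 ≤ t)
    (f g : ℂ → ℂ)
    (hf : IsMillerForm ℓ 0 m f) (hg : IsMillerForm (t * ℓ) 0 (t * m) g)
    (b a : ℕ → ℂ)
    (hb : ∀ z : ℂ, 0 < z.im →
      Summable (fun n : ℕ => b n * qexp z ^ n) ∧ (f z) ^ t = ∑' n : ℕ, b n * qexp z ^ n)
    (ha : ∀ z : ℂ, 0 < z.im →
      Summable (fun n : ℕ => a n * qexp z ^ n) ∧ g z = ∑' n : ℕ, a n * qexp z ^ n) :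
    ∀ d : ℕ, d ≤ t * m + (ℓ - m) →
      b d = a d ∧ b d = if d = t * m then 1 else 0 := by
  obtain ⟨c, hc, hclow⟩ := hf.2.2.2
  -- coefficients of f^(s+1), by induction
  have main : ∀ s : ℕ, ∃ e : ℕ → ℂ,
      (∀ z : ℂ, 0 < z.im → Summable (fun n : ℕ => e n * qexp z ^ n) ∧
        f z ^ (s + 1) = ∑' n : ℕ, e n * qexp z ^ n) ∧
      (∀ d : ℕ, d ≤ (s + 1) * m + (ℓ - m) → e d = if d = (s + 1) * m then 1 else 0) := by
    intro s
    induction s with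
    | zero =>
      refine ⟨c, fun z hz => ⟨(hc z hz).1, by rw [pow_one]; exact (hc z hz).2⟩,
        fun d hd => ?_⟩
      have hdl : d ≤ ℓ := by omega
      simpa [one_mul] using hclow d hdl
    | succ s ih =>
      obtain ⟨e, he, helow⟩ := ih
      refine ⟨fun n => ∑ kl ∈ Finset.HasAntidiagonal.antidiagonal n, e kl.1 * c kl.2, fun z hz => ?_,
        fun d hd => ?_⟩
      · obtain ⟨hs, heq⟩ := coeff_mul_q e c z (he z hz).1 (hc z hz).1
        exact ⟨hs, by rw [pow_succ, (he z hz).2, (hc z hz).2, heq]⟩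
      · show (∑ kl ∈ Finset.HasAntidiagonal.antidiagonal d, e kl.1 * c kl.2)
            = if d = (s + 1 + 1) * m then 1 else 0
        have hexp : (s + 1 + 1) * m = (s + 1) * m + m := by ring
        by_cases hdm : d = (s + 1 + 1) * m
        · rw [if_pos hdm]
          rw [Finset.sum_eq_single_of_mem ((s + 1) * m, m)
            (Finset.HasAntidiagonal.mem_antidiagonal.mpr (by omega)) ?_]
          · rw [helow ((s + 1) * m) (by omega), hclow m hm]
            simp
          · rintro ⟨i, j⟩ hkl hne
            rw [Finset.HasAntidiagonal.mem_antidiagonal] at hkl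
            rcases lt_or_ge j m with hj | hj
            · rw [hclow j (by omega)]
              simp [Nat.ne_of_lt hj]
            · have hi : i ≤ (s + 1) * m + (ℓ - m) := by omega
              rw [helow i hi]
              by_cases him : i = (s + 1) * m
              · exact absurd (by simp only [Prod.mk.injEq]; omega) hne
              · simp [him]
        · rw [if_neg hdm]
          apply Finset.sum_eq_zero
          rintro ⟨i, j⟩ hkl
          rw [Finset.HasAntidiagonal.mem_antidiagonal] at hkl
          rcases lt_or_ge j m with hj | hj
          · rw [hclow j (by omega)]
            simp [Nat.ne_of_lt hj]
          · have hi : i ≤ (s + 1) * m + (ℓ - m) := by omega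
            rw [helow i hi]
            by_cases him : i = (s + 1) * m
            · rw [hclow j (by omega)]
              have hjm : j ≠ m := by omega
              simp [hjm]
            · simp [him]
  obtain ⟨s, rfl⟩ : ∃ s, t = s + 1 := ⟨t - 1, by omega⟩
  obtain ⟨e, he, helow⟩ := main s
  obtain ⟨a', ha', ha'low⟩ := hg.2.2.2
  -- b = e
  have hbe : ∀ n, b n - e n = 0 := by
    apply qcoeff_unique
    intro z hz
    refine ⟨((hb z hz).1.sub (he z hz).1).congr fun n => by ring, ?_⟩
    calc (∑' n : ℕ, (b n - e n) * qexp z ^ n)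
        = ∑' n : ℕ, (b n * qexp z ^ n - e n * qexp z ^ n) := tsum_congr fun n => by ring
      _ = (∑' n : ℕ, b n * qexp z ^ n) - ∑' n : ℕ, e n * qexp z ^ n :=
          Summable.tsum_sub (hb z hz).1 (he z hz).1
      _ = 0 := by rw [← (hb z hz).2, ← (he z hz).2, sub_self]
  have hae : ∀ n, a n - a' n = 0 := by
    apply qcoeff_unique
    intro z hz
    refine ⟨((ha z hz).1.sub (ha' z hz).1).congr fun n => by ring, ?_⟩
    calc (∑' n : ℕ, (a n - a' n) * qexp z ^ n)
        = ∑' n : ℕ, (a n * qexp z ^ n - a' n * qexp z ^ n) := tsum_congr fun n => by ring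
      _ = (∑' n : ℕ, a n * qexp z ^ n) - ∑' n : ℕ, a' n * qexp z ^ n :=
          Summable.tsum_sub (ha z hz).1 (ha' z hz).1
      _ = 0 := by rw [← (ha z hz).2, ← (ha' z hz).2, sub_self]
  intro d hd
  have hbd : b d = e d := by have := hbe d; linear_combination this
  have had : a d = a' d := by have := hae d; linear_combination this
  have hdl : d ≤ (s + 1) * ℓ := by
    have h1 : s * m ≤ s * ℓ := Nat.mul_le_mul_left s hm
    have e1 : (s + 1) * m = s * m + m := by ring
    have e2 : (s + 1) * ℓ = s * ℓ + ℓ := by ring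
    omega
  have ha'd := ha'low d hdl
  have hed := helow d hd
  refine ⟨?_, by rw [hbd, hed]⟩
  rw [hbd, had, hed, ha'd]
end
end

section
/- Let ℓ ≥ 1, 0 ≤ m ≤ ℓ, t ≥ 1 an integer, and let 1 ≤ n ≤ ℓ − m. Then the sum of the n-th powers of the zeros (with multiplicity) of the Faber polynomial F_{12tℓ, tm} equals t times the sum of the n-th powers of the zeros (with multiplicity) of the Faber polynomial F_{12ℓ, m}. -/
open Complex Polynomial Real MeasureTheory Filter Topology

noncomputable section

set_option maxHeartbeats 2000000

def Qr (y : ℝ) : ℝ := Real.exp (-(2 * Real.pi * y))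

lemma qexp_eq (y : ℝ) : qexp (y * Complex.I) = ((Qr y : ℝ) : ℂ) := by
  rw [qexp, Qr, Complex.ofReal_exp]
  congr 1
  push_cast
  rw [mul_comm (y:ℂ) Complex.I, ← mul_assoc]
  rw [mul_assoc _ Complex.I Complex.I, Complex.I_mul_I]
  ring

lemma Qr_pos (y : ℝ) : 0 < Qr y := Real.exp_pos _

lemma Qr_tendsto : Tendsto Qr atTop (𝓝 0) := by
  apply Real.tendsto_exp_atBot.comp
  apply tendsto_neg_atBot_iff.mpr
  exact (tendsto_const_mul_atTop_of_pos (by positivity)).mpr tendsto_id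

lemma miller_tail (a : ℕ → ℂ) (L M : ℕ) (hM : M ≤ L)
    (hsum : Summable fun n => a n * qexp Complex.I ^ n)
    (hcoef : ∀ d, d ≤ L → a d = if d = M then 1 else 0) :
    ∃ C, 0 < C ∧ ∀ᶠ y : ℝ in atTop,
      (Summable fun n => a n * qexp (y * Complex.I) ^ n) ∧
      ‖(∑' n : ℕ, a n * qexp (y * Complex.I) ^ n) - qexp (y * Complex.I) ^ M‖
        ≤ C * Qr y ^ (L + 1) := by
  have hI : qexp Complex.I = ((Qr 1 : ℝ) : ℂ) := by
    rw [← qexp_eq]; norm_num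
  set w0 := Qr 1 with hw0def
  have hw0 : 0 < w0 := Qr_pos 1
  -- bound on coefficients
  obtain ⟨Cb, hCb⟩ : ∃ Cb, ∀ n, ‖a n‖ * w0 ^ n ≤ Cb := by
    have h1 := (hsum.tendsto_atTop_zero.norm).bddAbove_range
    obtain ⟨Cb, hCb⟩ := h1
    refine ⟨Cb, fun n => ?_⟩
    have := hCb (Set.mem_range_self (f := fun n => ‖a n * qexp Complex.I ^ n‖) n)
    simpa [hI, norm_mul, norm_pow, Complex.norm_real, abs_of_pos hw0] using this
  have hCb0 : 0 ≤ Cb := le_trans (by positivity) (hCb 0)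
  refine ⟨(2 * (Cb + 1)) / w0 ^ (L + 1), by positivity, ?_⟩
  have hev : ∀ᶠ y : ℝ in atTop, Qr y < w0 / 2 :=
    Qr_tendsto.eventually (eventually_lt_nhds (by positivity : (0:ℝ) < w0 / 2))
  filter_upwards [hev] with y hy
  set q := Qr y with hq
  have hq0 : 0 < q := Qr_pos y
  have hr0 : 0 ≤ q / w0 := by positivity
  have hr2 : q / w0 < 1 / 2 := by rw [div_lt_div_iff₀ hw0 (by norm_num)] at *; nlinarith
  have hr1 : q / w0 < 1 := lt_trans hr2 (by norm_num)
  have hbound : ∀ n, ‖a n * qexp (y * Complex.I) ^ n‖ ≤ (Cb + 1) * (q / w0) ^ n := by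
    intro n
    rw [qexp_eq, norm_mul, norm_pow, Complex.norm_real, Real.norm_eq_abs, abs_of_pos hq0]
    have h1 : ‖a n‖ ≤ (Cb + 1) / w0 ^ n := by
      rw [le_div_iff₀ (by positivity)]
      calc ‖a n‖ * w0 ^ n ≤ Cb := hCb n
        _ ≤ Cb + 1 := by linarith
    calc ‖a n‖ * q ^ n ≤ ((Cb + 1) / w0 ^ n) * q ^ n := by
          apply mul_le_mul_of_nonneg_right h1 (by positivity)
      _ = (Cb + 1) * (q / w0) ^ n := by rw [div_pow]; ring
  have hsummable : Summable fun n => a n * qexp (y * Complex.I) ^ n := by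
    apply Summable.of_norm_bounded ((summable_geometric_of_lt_one hr0 hr1).mul_left (Cb + 1)) hbound
  refine ⟨hsummable, ?_⟩
  have hsplit := hsummable.sum_add_tsum_nat_add (L + 1)
  have hfin : ∑ i ∈ Finset.range (L + 1), a i * qexp (y * Complex.I) ^ i
      = qexp (y * Complex.I) ^ M := by
    have hterm : ∀ i ∈ Finset.range (L + 1), a i * qexp (y * Complex.I) ^ i
        = if i = M then qexp (y * Complex.I) ^ i else 0 := by
      intro i hi
      rw [hcoef i (Nat.lt_succ_iff.mp (Finset.mem_range.mp hi)), ite_mul, one_mul, zero_mul]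
    rw [Finset.sum_congr rfl hterm,
      Finset.sum_ite_eq' (Finset.range (L + 1)) M (fun i => qexp (y * Complex.I) ^ i)]
    simp [Nat.lt_succ_iff, hM]
  rw [← hsplit, hfin, add_sub_cancel_left]
  -- bound the tail
  have htail : ∀ n : ℕ, ‖a (n + (L + 1)) * qexp (y * Complex.I) ^ (n + (L + 1))‖
      ≤ ((Cb + 1) * (q / w0) ^ (L + 1)) * (1 / 2) ^ n := by
    intro n
    calc ‖a (n + (L + 1)) * qexp (y * Complex.I) ^ (n + (L + 1))‖
        ≤ (Cb + 1) * (q / w0) ^ (n + (L + 1)) := hbound _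
      _ ≤ ((Cb + 1) * (q / w0) ^ (L + 1)) * (1 / 2) ^ n := by
          have h := pow_le_pow_left₀ hr0 hr2.le n
          have h2 : (Cb + 1) * (q / w0) ^ (n + (L + 1))
              = ((Cb + 1) * (q / w0) ^ (L + 1)) * (q / w0) ^ n := by
            rw [pow_add]; ring
          rw [h2]
          exact mul_le_mul_of_nonneg_left h (by positivity)
  calc ‖∑' n : ℕ, a (n + (L + 1)) * qexp (y * Complex.I) ^ (n + (L + 1))‖
      ≤ ∑' n : ℕ, ‖a (n + (L + 1)) * qexp (y * Complex.I) ^ (n + (L + 1))‖ :=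
        norm_tsum_le_tsum_norm ((hsummable.norm).comp_injective (add_left_injective (L+1)))
    _ ≤ ∑' n : ℕ, ((Cb + 1) * (q / w0) ^ (L + 1)) * (1 / 2) ^ n := by
        apply Summable.tsum_le_tsum htail ((hsummable.norm).comp_injective (add_left_injective (L+1)))
        exact (summable_geometric_two).mul_left _
    _ = ((Cb + 1) * (q / w0) ^ (L + 1)) * 2 := by
        rw [tsum_mul_left, tsum_geometric_two]
    _ ≤ (2 * (Cb + 1)) / w0 ^ (L + 1) * q ^ (L + 1) := by
        apply le_of_eq
        rw [div_pow]
        field_simp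


lemma disc_bounds : ∀ᶠ y : ℝ in atTop,
    Qr y / 2 ≤ ‖Disc (y * Complex.I)‖ ∧ ‖Disc (y * Complex.I)‖ ≤ Qr y := by
  filter_upwards [Qr_tendsto.eventually_lt_const (by norm_num : (0:ℝ) < 1/100)] with y hy
  set q := Qr y with hqdef
  have hq0 : 0 < q := Qr_pos y
  have hq1 : q < 1 / 100 := hy
  set u : ℕ → ℝ := fun n => (1 - q ^ (n + 1)) ^ 24 with hu
  have hqn : ∀ n : ℕ, 0 < q ^ (n + 1) ∧ q ^ (n + 1) ≤ q := by
    intro n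
    exact ⟨by positivity, by
      calc q ^ (n + 1) ≤ q ^ 1 := pow_le_pow_of_le_one hq0.le (by linarith) (by omega)
        _ = q := pow_one q⟩
  have hu_pos : ∀ n, 0 < u n := by
    intro n
    have := hqn n
    have : 0 < 1 - q ^ (n + 1) := by linarith
    positivity
  have hu_le : ∀ n, u n ≤ 1 := by
    intro n
    have h := hqn n
    apply pow_le_one₀ (by nlinarith) (by nlinarith)
  -- summability of logs
  have hlog : Summable fun n => Real.log (u n) := by
    apply Summable.of_norm_bounded (g := fun n => 48 * q ^ (n + 1))
    · apply Summable.mul_left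
      have : Summable fun n : ℕ => q ^ n := summable_geometric_of_lt_one hq0.le (by linarith)
      exact (summable_nat_add_iff 1).mpr this
    · intro n
      have h1 := (hqn n).1
      have h2 := (hqn n).2
      have hx1 : 1 - q ^ (n + 1) > 0 := by linarith
      rw [hu]
      rw [Real.log_pow]
      rw [Real.norm_eq_abs, abs_mul, Nat.abs_cast]
      have hlogneg : Real.log (1 - q ^ (n + 1)) ≤ 0 :=
        Real.log_nonpos (by linarith) (by linarith)
      rw [abs_of_nonpos hlogneg]
      have key : -Real.log (1 - q ^ (n + 1)) ≤ 2 * q ^ (n + 1) := by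
        have hlhs : -Real.log (1 - q ^ (n + 1)) = Real.log (1 - q ^ (n + 1))⁻¹ := by
          rw [Real.log_inv]
        rw [hlhs]
        have hb := Real.log_le_sub_one_of_pos (x := (1 - q ^ (n + 1))⁻¹) (by positivity)
        have : (1 - q ^ (n + 1))⁻¹ - 1 = q ^ (n + 1) / (1 - q ^ (n + 1)) := by
          field_simp
          ring
        rw [this] at hb
        refine le_trans hb ?_
        rw [div_le_iff₀ hx1]
        nlinarith
      push_cast
      nlinarith [key]
  have hmult : Multipliable u :=
    Real.multipliable_of_summable_log hu_pos hlog
  set P := ∏' n, u n with hP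
  have hprod : HasProd u P := hmult.hasProd
  -- bounds on P
  have hsum_q : Summable fun n : ℕ => q ^ (n + 1) :=
    (summable_nat_add_iff 1).mpr (summable_geometric_of_lt_one hq0.le (by linarith))
  have htsum_q : ∑' n : ℕ, q ^ (n + 1) ≤ 2 * q := by
    have : ∑' n : ℕ, q ^ (n + 1) = q * ∑' n : ℕ, q ^ n := by
      rw [← tsum_mul_left]
      congr 1; ext n; rw [pow_succ]; ring
    rw [this, tsum_geometric_of_lt_one hq0.le (by linarith)]
    have h1 : (1 - q)⁻¹ ≤ 2 := by
      rw [inv_le_comm₀ (by linarith) (by norm_num)]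
      linarith
    have h2 : (0:ℝ) < (1 - q)⁻¹ := inv_pos.mpr (by linarith)
    nlinarith
  have hPle : P ≤ 1 := by
    apply le_of_tendsto hprod
    filter_upwards with s
    exact Finset.prod_le_one (fun n _ => (hu_pos n).le) (fun n _ => hu_le n)
  have hPge : 1 / 2 ≤ P := by
    apply ge_of_tendsto hprod
    filter_upwards with s
    have hv : ∀ n, 1 - u n ≤ 24 * q ^ (n + 1) := by
      intro n
      have h1 := (hqn n).1
      have h2 := (hqn n).2
      have hber := one_add_mul_le_pow (a := -(q ^ (n + 1))) (by nlinarith) 24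
      push_cast at hber
      have huex : u n = (1 - q ^ (n + 1)) ^ 24 := rfl
      rw [huex]
      nlinarith [hber]
    have hv0 : ∀ n, 0 ≤ 1 - u n := fun n => by linarith [hu_le n]
    have hsum_le : ∑ n ∈ s, (1 - u n) ≤ 48 * q := by
      calc ∑ n ∈ s, (1 - u n) ≤ ∑ n ∈ s, 24 * q ^ (n + 1) :=
            Finset.sum_le_sum fun n _ => hv n
        _ = 24 * ∑ n ∈ s, q ^ (n + 1) := by rw [Finset.mul_sum]
        _ ≤ 24 * ∑' n : ℕ, q ^ (n + 1) := by
            apply mul_le_mul_of_nonneg_left _ (by norm_num)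
            exact Summable.sum_le_tsum s (fun n _ => by positivity) hsum_q
        _ ≤ 24 * (2 * q) := by linarith [htsum_q]
        _ = 48 * q := by ring
    have hre : ∏ n ∈ s, u n = ∏ n ∈ s, (1 - (1 - u n)) := by
      congr 1; ext n; ring
    rw [hre, Finset.prod_one_sub_ordered]
    have hterm : ∑ i ∈ s, (1 - u i) * ∏ j ∈ Finset.filter (fun j => j < i) s, (1 - (1 - u j))
        ≤ ∑ i ∈ s, (1 - u i) := by
      apply Finset.sum_le_sum
      intro i _
      have hprod_le : ∏ j ∈ Finset.filter (fun j => j < i) s, (1 - (1 - u j)) ≤ 1 := by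
        apply Finset.prod_le_one
        · intro j _; linarith [hu_pos j]
        · intro j _; linarith [hu_le j]
      have hprod_ge : (0:ℝ) ≤ ∏ j ∈ Finset.filter (fun j => j < i) s, (1 - (1 - u j)) := by
        apply Finset.prod_nonneg; intro j _; linarith [hu_pos j]
      nlinarith [hv0 i]
    have : ∑ i ∈ s, (1 - u i) * ∏ j ∈ Finset.filter (fun j => j < i) s, (1 - (1 - u j))
        ≤ 48 * q := le_trans hterm hsum_le
    linarith
  -- complex product
  have hfactor : ∀ n : ℕ, (1 - qexp (y * Complex.I) ^ (n + 1)) ^ 24 = ((u n : ℝ) : ℂ) := by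
    intro n
    rw [qexp_eq, hu]
    push_cast
    ring
  have hcprod : HasProd (fun n => (1 - qexp (y * Complex.I) ^ (n + 1)) ^ 24) ((P : ℝ) : ℂ) := by
    have := hprod.map (Complex.ofRealHom : ℝ →+* ℂ).toMonoidHom Complex.continuous_ofReal
    simp only [Function.comp_def, RingHom.toMonoidHom_eq_coe, MonoidHom.coe_coe] at this
    convert this using 2 with n
    exact hfactor n
    rfl
  have hDisc : Disc (y * Complex.I) = ((q * P : ℝ) : ℂ) := by
    rw [Disc, hcprod.tprod_eq, qexp_eq]
    push_cast
    ring
  rw [hDisc]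
  rw [Complex.norm_real, Real.norm_eq_abs, abs_of_pos (by nlinarith)]
  constructor
  · nlinarith
  · nlinarith


lemma norm_term (c d : ℤ) (y : ℝ) :
    ‖((c : ℂ) * (y * Complex.I) + (d : ℂ))‖ ^ 2 = (c : ℝ) ^ 2 * y ^ 2 + (d : ℝ) ^ 2 := by
  rw [Complex.sq_norm, Complex.normSq_apply]
  simp [Complex.add_re, Complex.mul_re, Complex.mul_im]
  ring

lemma eis4_tendsto : Tendsto (fun y : ℝ => Eis 4 (y * Complex.I)) atTop (𝓝 1) := by
  have h4 : (4 : ℕ) ≠ 0 := by norm_num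
  simp only [Eis, if_neg h4]
  -- dominated convergence
  set F : ℝ → ℤ × ℤ → ℂ := fun y p =>
    if Int.gcd p.1 p.2 = 1 then 1 / ((p.1 : ℂ) * (y * Complex.I) + (p.2 : ℂ)) ^ 4 else 0 with hF
  set g : ℤ × ℤ → ℂ := fun p => (if p = ((0:ℤ), (1:ℤ)) then 1 else 0) +
    (if p = ((0:ℤ), (-1:ℤ)) then 1 else 0) with hg
  have hgsum : HasSum g 2 := by
    rw [hg]
    have h := (hasSum_ite_eq ((0:ℤ), (1:ℤ)) (1:ℂ)).add (hasSum_ite_eq ((0:ℤ), (-1:ℤ)) (1:ℂ))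
    convert h using 1
    norm_num
  have hgt : (∑' p, g p) = 2 := hgsum.tsum_eq
  have key : Tendsto (fun y => ∑' p : ℤ × ℤ, F y p) atTop (𝓝 (∑' p, g p)) := by
    apply tendsto_tsum_of_dominated_convergence
      (bound := fun p : ℤ × ℤ => ‖![p.1, p.2]‖ ^ (-(4:ℝ)))
    · exact (finTwoArrowEquiv ℤ).symm.summable_iff.mpr
        (EisensteinSeries.summable_one_div_norm_rpow (by norm_num))
    · -- pointwise limits
      intro p
      obtain ⟨c, d⟩ := p
      by_cases hgcd : Int.gcd c d = 1
      · by_cases hc : c = 0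
        · subst hc
          have hd : d = 1 ∨ d = -1 := by
            rw [Int.gcd] at hgcd
            simp at hgcd
            omega
          have hterm : ∀ y : ℝ, F y (0, d) = 1 := by
            intro y
            rw [hF]
            simp only [if_pos hgcd]
            rcases hd with rfl | rfl <;> norm_num
          simp only [hterm]
          have hgval : g (0, d) = 1 := by
            rw [hg]
            rcases hd with rfl | rfl <;> norm_num
          rw [hgval]
          exact tendsto_const_nhds
        · -- c ≠ 0 : tends to 0
          have hgval : g (c, d) = 0 := by
            rw [hg]
            have h1 : (c, d) ≠ ((0:ℤ), (1:ℤ)) := by simp [hc]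
            have h2 : (c, d) ≠ ((0:ℤ), (-1:ℤ)) := by simp [hc]
            simp only [hg, if_neg h1, if_neg h2, add_zero]
          rw [hgval]
          have hnorm : ∀ᶠ y : ℝ in atTop, ‖F y (c, d)‖ ≤ 1 / ((c:ℝ)^4 * y^4) := by
            filter_upwards [eventually_ge_atTop (1:ℝ)] with y hy1
            rw [hF]
            simp only [if_pos hgcd]
            rw [norm_div, norm_one, norm_pow]
            have hns := norm_term c d y
            have hcy : (c:ℝ)^2 * y^2 + (d:ℝ)^2 ≥ (c:ℝ)^2 * y^2 := by nlinarith
            have hc2 : (1:ℝ) ≤ (c:ℝ)^2 := by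
              have : (1:ℤ) ≤ c^2 := by rcases lt_or_gt_of_ne hc with h | h <;> nlinarith
              exact_mod_cast this
            have hpos : (0:ℝ) < (c:ℝ)^2 * y^2 := by nlinarith
            have h44 : ‖(c : ℂ) * (↑y * Complex.I) + (d : ℂ)‖ ^ 4 = ((c:ℝ)^2*y^2 + (d:ℝ)^2)^2 := by
              rw [show (4:ℕ) = 2*2 by norm_num, pow_mul, hns]
            rw [h44]
            rw [div_le_div_iff₀ (by nlinarith) (by nlinarith)]
            nlinarith
          apply squeeze_zero_norm' hnorm
          rw [show (fun y:ℝ => 1 / ((c:ℝ)^4 * y^4)) = (fun y:ℝ => ((c:ℝ)^4)⁻¹ * (y^4)⁻¹) by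
            funext y; field_simp]
          rw [show (0:ℝ) = ((c:ℝ)^4)⁻¹ * 0 by ring]
          apply Tendsto.const_mul
          exact (tendsto_pow_atTop (by norm_num)).inv_tendsto_atTop
      · -- gcd ≠ 1: F y p = 0, g p = 0
        have h1 : ∀ y : ℝ, F y (c, d) = 0 := fun y => by rw [hF]; simp [hgcd]
        have hgval : g (c, d) = 0 := by
          rw [hg]
          have e1 : (c, d) ≠ ((0:ℤ), (1:ℤ)) := by
            rintro h
            rw [Prod.ext_iff] at h
            obtain ⟨rfl, rfl⟩ := h
            norm_num at hgcd
          have e2 : (c, d) ≠ ((0:ℤ), (-1:ℤ)) := by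
            rintro h
            rw [Prod.ext_iff] at h
            obtain ⟨rfl, rfl⟩ := h
            norm_num at hgcd
          simp only [hg, if_neg e1, if_neg e2, add_zero]
        simp only [h1, hgval]
        exact tendsto_const_nhds
    · -- uniform bound for y ≥ 1
      filter_upwards [eventually_ge_atTop (1:ℝ)] with y hy1
      rintro ⟨c, d⟩
      by_cases hgcd : Int.gcd c d = 1
      · rw [hF]
        simp only [if_pos hgcd]
        have hne : ¬(c = 0 ∧ d = 0) := by
          rintro ⟨rfl, rfl⟩; norm_num at hgcd
        have hnormx : ‖![c, d]‖ = ((max c.natAbs d.natAbs : ℕ) : ℝ) := by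
          rw [EisensteinSeries.norm_eq_max_natAbs]
          simp
        have hmax1 : 1 ≤ max c.natAbs d.natAbs := by
          rcases Nat.eq_zero_or_pos (max c.natAbs d.natAbs) with h | h
          · exfalso
            simp only [Nat.max_eq_zero_iff, Int.natAbs_eq_zero] at h
            exact hne h
          · exact h
        have hrpow : ‖![c, d]‖ ^ (-(4:ℝ)) = (((max c.natAbs d.natAbs : ℕ):ℝ) ^ (4:ℕ))⁻¹ := by
          rw [hnormx, ← Real.rpow_natCast _ 4, ← Real.rpow_neg (by positivity)]
          norm_num
        rw [hrpow, norm_div, norm_one, norm_pow]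
        have hns := norm_term c d y
        have h44 : ‖(c : ℂ) * (↑y * Complex.I) + (d : ℂ)‖ ^ 4 = ((c:ℝ)^2*y^2 + (d:ℝ)^2)^2 := by
          rw [show (4:ℕ) = 2*2 by norm_num, pow_mul, hns]
        rw [h44]
        have hm : ((max c.natAbs d.natAbs : ℕ):ℝ)^2 ≤ (c:ℝ)^2*y^2 + (d:ℝ)^2 := by
          have hc2 : ((c.natAbs:ℝ))^2 = (c:ℝ)^2 := by
            push_cast [Nat.cast_natAbs]; exact sq_abs _
          have hd2 : ((d.natAbs:ℝ))^2 = (d:ℝ)^2 := by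
            push_cast [Nat.cast_natAbs]; exact sq_abs _
          have hnat : ((max c.natAbs d.natAbs : ℕ):ℝ)^2 ≤ ((c.natAbs:ℝ))^2 + ((d.natAbs:ℝ))^2 := by
            have : (max c.natAbs d.natAbs)^2 ≤ c.natAbs^2 + d.natAbs^2 := by
              rcases max_cases c.natAbs d.natAbs with ⟨h, _⟩ | ⟨h, _⟩ <;> rw [h] <;> nlinarith
            exact_mod_cast this
          have hy2 : (c:ℝ)^2 ≤ (c:ℝ)^2 * y^2 := by nlinarith [sq_nonneg (c:ℝ), sq_nonneg ((c:ℝ)*y), sq_nonneg ((c:ℝ)*(y-1))]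
          calc ((max c.natAbs d.natAbs : ℕ):ℝ)^2 ≤ ((c.natAbs:ℝ))^2 + ((d.natAbs:ℝ))^2 := hnat
            _ = (c:ℝ)^2 + (d:ℝ)^2 := by rw [hc2, hd2]
            _ ≤ (c:ℝ)^2 * y^2 + (d:ℝ)^2 := by linarith
        have hmpos : (0:ℝ) < ((max c.natAbs d.natAbs : ℕ):ℝ) := by exact_mod_cast hmax1
        have hsum_pos : (0:ℝ) < (c:ℝ)^2*y^2 + (d:ℝ)^2 := by
          calc (0:ℝ) < ((max c.natAbs d.natAbs : ℕ):ℝ)^2 := by positivity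
            _ ≤ _ := hm
        rw [one_div]
        rw [inv_le_inv₀ (by positivity) (by positivity)]
        calc ((max c.natAbs d.natAbs : ℕ):ℝ) ^ (4:ℕ)
            = (((max c.natAbs d.natAbs : ℕ):ℝ)^2)^2 := by ring
          _ ≤ ((c:ℝ)^2*y^2 + (d:ℝ)^2)^2 := by nlinarith [hm, sq_nonneg (((max c.natAbs d.natAbs : ℕ):ℝ))]
      · rw [hF]
        simp only [if_neg hgcd]
        rw [norm_zero]
        positivity
  show Tendsto (fun y : ℝ => (1/2 : ℂ) * ∑' p : ℤ × ℤ, F y p) atTop (𝓝 1)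
  have final := Tendsto.const_mul (1/2 : ℂ) key
  convert final using 2
  rw [hgt]
  norm_num


lemma poly_lower_bound (H : Polynomial ℂ) (hH : H ≠ 0) :
    ∃ R C : ℝ, 0 < C ∧ ∀ w : ℂ, R ≤ ‖w‖ → C * ‖w‖ ^ H.natDegree ≤ ‖H.eval w‖ := by
  set e := H.natDegree with he
  have hlc : H.leadingCoeff ≠ 0 := leadingCoeff_ne_zero.mpr hH
  have hlcn : 0 < ‖H.leadingCoeff‖ := norm_pos_iff.mpr hlc
  rcases Nat.eq_zero_or_pos e with he0 | hepos
  · refine ⟨0, ‖H.leadingCoeff‖, hlcn, fun w _ => ?_⟩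
    have hd0 : H.natDegree = 0 := he.symm.trans he0
    rw [he0, pow_zero, mul_one]
    conv_rhs => rw [Polynomial.eq_C_of_natDegree_eq_zero hd0]
    rw [eval_C]
    apply le_of_eq
    congr 1
    rw [Polynomial.leadingCoeff, hd0]
  · set S := ∑ i ∈ Finset.range e, ‖H.coeff i‖ with hS
    have hS0 : 0 ≤ S := Finset.sum_nonneg fun i _ => norm_nonneg _
    refine ⟨max 1 (2 * S / ‖H.leadingCoeff‖ + 1), ‖H.leadingCoeff‖ / 2, by positivity, ?_⟩
    intro w hw
    have hw1 : 1 ≤ ‖w‖ := le_trans (le_max_left _ _) hw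
    have hw2 : 2 * S / ‖H.leadingCoeff‖ + 1 ≤ ‖w‖ := le_trans (le_max_right _ _) hw
    have hwS : 2 * S ≤ ‖H.leadingCoeff‖ * ‖w‖ := by
      rw [div_add' _ _ _ (ne_of_gt hlcn)] at hw2
      rw [div_le_iff₀ hlcn] at hw2
      nlinarith
    have heval : H.eval w = (∑ i ∈ Finset.range e, H.coeff i * w ^ i)
        + H.leadingCoeff * w ^ e := by
      rw [eval_eq_sum_range, Finset.sum_range_succ, ← he, Polynomial.leadingCoeff]
    have hsum_bound : ‖∑ i ∈ Finset.range e, H.coeff i * w ^ i‖ ≤ S * ‖w‖ ^ (e - 1) := by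
      calc ‖∑ i ∈ Finset.range e, H.coeff i * w ^ i‖
          ≤ ∑ i ∈ Finset.range e, ‖H.coeff i * w ^ i‖ := norm_sum_le _ _
        _ ≤ ∑ i ∈ Finset.range e, ‖H.coeff i‖ * ‖w‖ ^ (e - 1) := by
            apply Finset.sum_le_sum
            intro i hi
            rw [norm_mul, norm_pow]
            apply mul_le_mul_of_nonneg_left _ (norm_nonneg _)
            apply pow_le_pow_right₀ hw1
            have := Finset.mem_range.mp hi
            omega
        _ = S * ‖w‖ ^ (e - 1) := by rw [← Finset.sum_mul]
    have hmain : ‖H.leadingCoeff‖ * ‖w‖ ^ e - S * ‖w‖ ^ (e - 1) ≤ ‖H.eval w‖ := by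
      rw [heval]
      calc ‖H.leadingCoeff‖ * ‖w‖ ^ e - S * ‖w‖ ^ (e - 1)
          = ‖H.leadingCoeff * w ^ e‖ - S * ‖w‖ ^ (e - 1) := by rw [norm_mul, norm_pow]
        _ ≤ ‖H.leadingCoeff * w ^ e‖ - ‖∑ i ∈ Finset.range e, H.coeff i * w ^ i‖ := by
            linarith
        _ ≤ ‖(∑ i ∈ Finset.range e, H.coeff i * w ^ i) + H.leadingCoeff * w ^ e‖ := by
            set A := ∑ i ∈ Finset.range e, H.coeff i * w ^ i
            set B := H.leadingCoeff * w ^ e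
            have hx : ‖B‖ ≤ ‖A + B‖ + ‖A‖ := by
              calc ‖B‖ = ‖A + B - A‖ := by congr 1; ring
                _ ≤ ‖A + B‖ + ‖A‖ := norm_sub_le _ _
            linarith
    -- conclude
    have hpow : ‖w‖ ^ e = ‖w‖ ^ (e - 1) * ‖w‖ := by
      conv_lhs => rw [show e = (e - 1) + 1 by omega]
      rw [pow_succ]
    have hSw : S * ‖w‖ ^ (e - 1) ≤ (‖H.leadingCoeff‖ / 2) * ‖w‖ ^ e := by
      rw [hpow]
      nlinarith [pow_nonneg (norm_nonneg w) (e - 1), hwS]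
    calc (‖H.leadingCoeff‖ / 2) * ‖w‖ ^ e
        = ‖H.leadingCoeff‖ * ‖w‖ ^ e - (‖H.leadingCoeff‖ / 2) * ‖w‖ ^ e := by ring
      _ ≤ ‖H.leadingCoeff‖ * ‖w‖ ^ e - S * ‖w‖ ^ (e - 1) := by linarith
      _ ≤ ‖H.eval w‖ := hmain


lemma multiset_pow_sum {D : ℕ} (v : Fin D → ℂ) (k : ℕ) :
    ((Multiset.map v Finset.univ.val).map (· ^ k)).sum = ∑ i : Fin D, v i ^ k := by
  rw [Multiset.map_map, Finset.sum]
  rfl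

/-- Newton's identity for multisets of complex numbers. -/
lemma multiset_newton (M : Multiset ℂ) {k : ℕ} (hk : 0 < k) :
    (M.map (· ^ k)).sum = (-1) ^ (k + 1) * k * M.esymm k -
      ∑ a ∈ Finset.filter (fun a => a.1 ∈ Set.Ioo 0 k) (Finset.HasAntidiagonal.antidiagonal k),
        (-1) ^ a.1 * M.esymm a.1 * (M.map (· ^ a.2)).sum := by
  classical
  set v : Fin M.toList.length → ℂ := M.toList.get with hv
  have huniv : Multiset.map v Finset.univ.val = M := by
    have h1 : (Finset.univ.val : Multiset (Fin M.toList.length)) = ↑(List.finRange M.toList.length) := rfl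
    rw [h1]
    have h2 : Multiset.map v ↑(List.finRange M.toList.length)
        = ↑(List.map v (List.finRange M.toList.length)) := by simp
    rw [h2, hv, List.map_get_finRange, Multiset.coe_toList]
  have hid := MvPolynomial.psum_eq_mul_esymm_sub_sum (Fin M.toList.length) ℂ k hk
  have := congrArg (MvPolynomial.aeval v) hid
  simp only [MvPolynomial.psum, map_sum, map_sub, map_mul, map_pow, map_neg, map_one,
    map_natCast, MvPolynomial.aeval_X, MvPolynomial.aeval_esymm_eq_multiset_esymm,
    huniv] at this
  rw [← multiset_pow_sum v k, huniv] at this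
  convert this using 2
  refine Finset.sum_congr rfl fun a _ => ?_
  rw [← multiset_pow_sum v a.2, huniv]

lemma psum_eq_of_esymm (M₁ M₂ : Multiset ℂ)
    (hcard : Multiset.card M₁ = Multiset.card M₂) (n : ℕ)
    (he : ∀ j, 1 ≤ j → j ≤ n → M₁.esymm j = M₂.esymm j) :
    ∀ k, k ≤ n → (M₁.map (· ^ k)).sum = (M₂.map (· ^ k)).sum := by
  intro k
  induction k using Nat.strong_induction_on with
  | _ k ih =>
    intro hkn
    rcases Nat.eq_zero_or_pos k with rfl | hk
    · simp only [pow_zero]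
      rw [Multiset.map_const', Multiset.map_const', Multiset.sum_replicate, Multiset.sum_replicate,
        hcard]
    · rw [multiset_newton M₁ hk, multiset_newton M₂ hk, he k hk hkn]
      congr 1
      refine Finset.sum_congr rfl fun a ha => ?_
      simp only [Finset.mem_filter, Finset.HasAntidiagonal.mem_antidiagonal, Set.mem_Ioo] at ha
      rw [he a.1 ha.2.1 (le_trans (le_of_lt ha.2.2) hkn),
        ih a.2 (by omega) (by omega)]

lemma powerSumRoots_eq_of_coeff (P Q : Polynomial ℂ) (hP : P.Monic) (hQ : Q.Monic)
    (hd : P.natDegree = Q.natDegree) {n : ℕ} (hnd : n ≤ P.natDegree)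
    (hc : ∀ i, i ≤ n → P.coeff (P.natDegree - i) = Q.coeff (P.natDegree - i)) :
    powerSumRoots P n = powerSumRoots Q n := by
  have hcP : Multiset.card P.roots = P.natDegree :=
    splits_iff_card_roots.mp (IsAlgClosed.splits P)
  have hcQ : Multiset.card Q.roots = Q.natDegree :=
    splits_iff_card_roots.mp (IsAlgClosed.splits Q)
  have he : ∀ j, 1 ≤ j → j ≤ n → P.roots.esymm j = Q.roots.esymm j := by
    intro j h1 hjn
    have hjP : j ≤ P.natDegree := le_trans hjn hnd
    have h1' := coeff_eq_esymm_roots_of_card hcP (k := P.natDegree - j) (by omega)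
    have h2' := coeff_eq_esymm_roots_of_card hcQ (k := Q.natDegree - j) (by omega)
    rw [hP.leadingCoeff, one_mul] at h1'
    rw [hQ.leadingCoeff, one_mul] at h2'
    have hj1 : P.natDegree - (P.natDegree - j) = j := by omega
    have hj2 : Q.natDegree - (Q.natDegree - j) = j := by omega
    rw [hj1] at h1'
    rw [hj2] at h2'
    have hco := hc j hjn
    have hPQ : P.natDegree - j = Q.natDegree - j := by omega
    rw [h1', hPQ, h2'] at hco
    exact mul_left_cancel₀ (pow_ne_zero j (by norm_num : (-1 : ℂ) ≠ 0)) hco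
  have := psum_eq_of_esymm P.roots Q.roots (by rw [hcP, hcQ, hd]) n he n le_rfl
  simpa [powerSumRoots] using this


lemma pow_sub_pow_norm_le (x y : ℂ) (M : ℝ) (t : ℕ) (hx : ‖x‖ ≤ M) (hy : ‖y‖ ≤ M) :
    ‖x ^ t - y ^ t‖ ≤ t * M ^ (t - 1) * ‖x - y‖ := by
  rw [← geom_sum₂_mul x y t, norm_mul]
  apply mul_le_mul_of_nonneg_right _ (norm_nonneg _)
  have hM : 0 ≤ M := le_trans (norm_nonneg x) hx
  calc ‖∑ i ∈ Finset.range t, x ^ i * y ^ (t - 1 - i)‖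
      ≤ ∑ i ∈ Finset.range t, ‖x ^ i * y ^ (t - 1 - i)‖ := norm_sum_le _ _
    _ ≤ ∑ _i ∈ Finset.range t, M ^ (t - 1) := by
        apply Finset.sum_le_sum
        intro i hi
        have hi' := Finset.mem_range.mp hi
        rw [norm_mul, norm_pow, norm_pow]
        calc ‖x‖ ^ i * ‖y‖ ^ (t - 1 - i)
            ≤ M ^ i * M ^ (t - 1 - i) := by
              apply mul_le_mul (pow_le_pow_left₀ (norm_nonneg _) hx i)
                (pow_le_pow_left₀ (norm_nonneg _) hy _) (by positivity) (by positivity)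
          _ = M ^ (t - 1) := by rw [← pow_add]; congr 1; omega
    _ = t * M ^ (t - 1) := by
        rw [Finset.sum_const, Finset.card_range, nsmul_eq_mul]

/-- For `ℓ ≥ 1`, `0 ≤ m ≤ ℓ`, `t ≥ 1` and `1 ≤ n ≤ ℓ - m`, the sum
of the `n`-th powers of the zeros (with multiplicity) of the Faber polynomial
`F_{12tℓ,tm}` equals `t` times that of `F_{12ℓ,m}`. -/
theorem power_sum_scaling (ℓ m t n : ℕ) (hℓ : 1 ≤ ℓ) (hm : m ≤ ℓ) (ht : 1 ≤ t)
    (hn1 : 1 ≤ n) (hn2 : n ≤ ℓ - m)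
    (f g : ℂ → ℂ) (F G : Polynomial ℂ)
    (hf : IsMillerForm ℓ 0 m f) (hF : IsFaber ℓ 0 m f F)
    (hg : IsMillerForm (t * ℓ) 0 (t * m) g) (hG : IsFaber (t * ℓ) 0 (t * m) g G) :
    powerSumRoots G n = (t : ℂ) * powerSumRoots F n := by
  classical
  obtain ⟨-, -, -, a, ha, hacoef⟩ := hf
  obtain ⟨-, -, -, b, hb, hbcoef⟩ := hg
  obtain ⟨hFmon, hFdeg, hFeq⟩ := hF
  obtain ⟨hGmon, hGdeg, hGeq⟩ := hG
  have hEis0 : ∀ z : ℂ, Eis 0 z = 1 := fun z => by simp [Eis]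
  have hmlt : m < ℓ := by omega
  set D := t * (ℓ - m) with hD
  have htlm : t * (ℓ - m) = t * ℓ - t * m := Nat.mul_sub t ℓ m
  have htm_le : t * m ≤ t * ℓ := Nat.mul_le_mul_left t hm
  have hlm_le_D : ℓ - m ≤ D := by
    calc ℓ - m = 1 * (ℓ - m) := (one_mul _).symm
      _ ≤ t * (ℓ - m) := Nat.mul_le_mul_right _ ht
  have hGD : G.natDegree = D := by rw [hGdeg, hD, htlm]
  have hFtmon : (F ^ t).Monic := hFmon.pow t
  have hFtD : (F ^ t).natDegree = D := by rw [Polynomial.natDegree_pow, hFdeg, hD]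
  set H := G - F ^ t with hH
  have claim : ∀ i, i ≤ n → G.coeff (G.natDegree - i) = (F ^ t).coeff (G.natDegree - i) := by
    by_cases hH0 : H = 0
    · intro i _
      have hGF : G = F ^ t := by rwa [hH, sub_eq_zero] at hH0
      rw [hGF]
    · have hdlt : H.natDegree + (ℓ - m) < D := by
        by_contra hbig
        push_neg at hbig
        set dH := H.natDegree with hdH
        have hdHD : dH ≤ D := by
          have h1 := Polynomial.natDegree_sub_le G (F ^ t)
          rw [hGD, hFtD] at h1
          simpa using h1
        obtain ⟨R, CH, hCH, hHlow⟩ := poly_lower_bound H hH0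
        have hfsum : Summable fun k => a k * qexp Complex.I ^ k := (ha Complex.I (by simp)).1
        have hgsum : Summable fun k => b k * qexp Complex.I ^ k := (hb Complex.I (by simp)).1
        obtain ⟨Cf, hCf, hfev⟩ := miller_tail a ℓ m hm hfsum hacoef
        obtain ⟨Cg, hCg, hgev⟩ := miller_tail b (t * ℓ) (t * m) htm_le hgsum hbcoef
        set E := t * m + (ℓ - m) + 1 with hE
        set K1 := Cg + t * 2 ^ (t - 1) * Cf with hK1
        set K := 8 ^ dH * 2 ^ (t * ℓ) * K1 with hK
        have hK1pos : 0 < K1 := by positivity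
        have hKpos : 0 < K := by positivity
        have hfinal : ∀ᶠ y : ℝ in atTop, CH ≤ K * Qr y := by
          filter_upwards [hfev, hgev, disc_bounds, eventually_gt_atTop (0:ℝ),
            eis4_tendsto.norm.eventually_const_lt
              (show (1/2:ℝ) < ‖(1:ℂ)‖ by norm_num),
            Qr_tendsto.eventually_lt_const (show (0:ℝ) < 1 by norm_num),
            Qr_tendsto.eventually_lt_const (show (0:ℝ) < 1/(Cf+1) by positivity),
            Qr_tendsto.eventually_lt_const
              (show (0:ℝ) < 1/(8 * (max R 1)) by positivity)]
            with y hfy hgy hdy hy0 hey hq1 hqcf hqR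
          set q := Qr y with hq
          have hq0 : 0 < q := Qr_pos y
          have him : 0 < ((y:ℂ) * Complex.I).im := by simp [hy0]
          have hqe : qexp ((y:ℂ) * Complex.I) = ((q:ℝ):ℂ) := qexp_eq y
          have hf' : ‖f ((y:ℂ) * Complex.I) - ((q:ℝ):ℂ) ^ m‖ ≤ Cf * q ^ (ℓ+1) := by
            rw [(ha _ him).2, ← hqe]; exact hfy.2
          have hg' : ‖g ((y:ℂ) * Complex.I) - ((q:ℝ):ℂ) ^ (t*m)‖ ≤ Cg * q ^ (t*ℓ+1) := by
            rw [(hb _ him).2, ← hqe]; exact hgy.2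
          have hDisc1 : q/2 ≤ ‖Disc ((y:ℂ) * Complex.I)‖ := hdy.1
          have hDisc2 : ‖Disc ((y:ℂ) * Complex.I)‖ ≤ q := hdy.2
          have hDiscpos : 0 < ‖Disc ((y:ℂ) * Complex.I)‖ := by linarith
          -- lower bound on |j|
          have hjlow : 1/(8*q) ≤ ‖jinv ((y:ℂ) * Complex.I)‖ := by
            have hnum : (1/2:ℝ)^3 ≤ ‖Eis 4 ((y:ℂ) * Complex.I)‖^3 :=
              pow_le_pow_left₀ (by norm_num) hey.le 3
            have hj : ‖jinv ((y:ℂ) * Complex.I)‖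
                = ‖Eis 4 ((y:ℂ) * Complex.I)‖^3 / ‖Disc ((y:ℂ) * Complex.I)‖ := by
              rw [jinv, norm_div, norm_pow]
            rw [hj, show (1:ℝ)/(8*q) = (1/2)^3/q by ring]
            exact div_le_div₀ (by positivity) hnum hDiscpos hDisc2
          have hjR : R ≤ ‖jinv ((y:ℂ) * Complex.I)‖ := by
            have hM1 : (0:ℝ) < max R 1 := lt_of_lt_of_le one_pos (le_max_right R 1)
            rw [lt_div_iff₀ (by positivity)] at hqR
            have : max R 1 ≤ 1/(8*q) := by
              rw [le_div_iff₀ (by positivity)]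
              nlinarith
            exact le_trans (le_max_left R 1) (le_trans this hjlow)
          have hHlowy := hHlow _ hjR
          -- the algebraic identity
          have hfeq2 : f ((y:ℂ) * Complex.I)
              = Disc ((y:ℂ) * Complex.I) ^ ℓ * F.eval (jinv ((y:ℂ) * Complex.I)) := by
            have h1 := hFeq _ him
            rwa [hEis0, mul_one] at h1
          have hgeq2 : g ((y:ℂ) * Complex.I)
              = Disc ((y:ℂ) * Complex.I) ^ (t*ℓ) * G.eval (jinv ((y:ℂ) * Complex.I)) := by
            have h1 := hGeq _ him
            rwa [hEis0, mul_one] at h1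
          have hHev : H.eval (jinv ((y:ℂ) * Complex.I)) * Disc ((y:ℂ) * Complex.I) ^ (t*ℓ)
              = g ((y:ℂ) * Complex.I) - f ((y:ℂ) * Complex.I) ^ t := by
            rw [hH, Polynomial.eval_sub, Polynomial.eval_pow, hgeq2, hfeq2, mul_pow,
              ← pow_mul, Nat.mul_comm ℓ t]
            ring
          have hnormid : ‖H.eval (jinv ((y:ℂ) * Complex.I))‖
              * ‖Disc ((y:ℂ) * Complex.I)‖ ^ (t*ℓ)
              = ‖g ((y:ℂ) * Complex.I) - f ((y:ℂ) * Complex.I) ^ t‖ := by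
            rw [← norm_pow, ← norm_mul, hHev]
          -- upper bound on ‖g - f^t‖
          have hqm : ‖((q:ℝ):ℂ) ^ m‖ = q ^ m := by
            rw [norm_pow, Complex.norm_real, Real.norm_eq_abs, abs_of_pos hq0]
          have hCfq : Cf * q ^ (ℓ+1) ≤ q ^ m := by
            rw [lt_div_iff₀ (by positivity)] at hqcf
            have h2 : Cf * q ≤ 1 := by nlinarith
            calc Cf * q ^ (ℓ+1) = (Cf * q) * q ^ ℓ := by rw [pow_succ]; ring
              _ ≤ 1 * q ^ ℓ := mul_le_mul_of_nonneg_right h2 (by positivity)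
              _ = q ^ ℓ := one_mul _
              _ ≤ q ^ m := pow_le_pow_of_le_one hq0.le hq1.le hm
          have hfnorm : ‖f ((y:ℂ) * Complex.I)‖ ≤ 2 * q ^ m := by
            have h1 : ‖f ((y:ℂ) * Complex.I)‖
                ≤ ‖f ((y:ℂ) * Complex.I) - ((q:ℝ):ℂ) ^ m‖ + ‖((q:ℝ):ℂ) ^ m‖ := by
              calc ‖f ((y:ℂ) * Complex.I)‖
                  = ‖(f ((y:ℂ) * Complex.I) - ((q:ℝ):ℂ) ^ m) + ((q:ℝ):ℂ) ^ m‖ := by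
                    congr 1; ring
                _ ≤ _ := norm_add_le _ _
            rw [hqm] at h1
            linarith
          have hft : ‖f ((y:ℂ) * Complex.I) ^ t - (((q:ℝ):ℂ) ^ m) ^ t‖
              ≤ t * (2 * q ^ m) ^ (t-1) * (Cf * q ^ (ℓ+1)) := by
            refine le_trans (pow_sub_pow_norm_le _ _ (2 * q ^ m) t hfnorm ?_) ?_
            · rw [hqm]; nlinarith [pow_pos hq0 m]
            · exact mul_le_mul_of_nonneg_left hf' (by positivity)
          have hXt : (((q:ℝ):ℂ) ^ m) ^ t = ((q:ℝ):ℂ) ^ (t*m) := by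
            rw [← pow_mul, Nat.mul_comm]
          have hexpE1 : E ≤ t * ℓ + 1 := by omega
          have hmt1 : m * (t - 1) = m * t - m := by
            have := Nat.mul_sub m t 1
            simpa using this
          have hmmt : m ≤ m * t := Nat.le_mul_of_pos_right m (by omega)
          have hmtc : m * t = t * m := Nat.mul_comm m t
          have hexpE2 : m * (t-1) + (ℓ+1) = E := by omega
          have hgf : ‖g ((y:ℂ) * Complex.I) - f ((y:ℂ) * Complex.I) ^ t‖ ≤ K1 * q ^ E := by
            have htri : ‖g ((y:ℂ) * Complex.I) - f ((y:ℂ) * Complex.I) ^ t‖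
                ≤ ‖g ((y:ℂ) * Complex.I) - ((q:ℝ):ℂ) ^ (t*m)‖
                  + ‖f ((y:ℂ) * Complex.I) ^ t - (((q:ℝ):ℂ) ^ m) ^ t‖ := by
              rw [hXt]
              calc ‖g ((y:ℂ) * Complex.I) - f ((y:ℂ) * Complex.I) ^ t‖
                  = ‖(g ((y:ℂ) * Complex.I) - ((q:ℝ):ℂ) ^ (t*m))
                    + (((q:ℝ):ℂ) ^ (t*m) - f ((y:ℂ) * Complex.I) ^ t)‖ := by congr 1; ring
                _ ≤ _ := by
                    refine le_trans (norm_add_le _ _) ?_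
                    rw [norm_sub_rev (((q:ℝ):ℂ) ^ (t*m))]
            have hb1 : Cg * q ^ (t*ℓ+1) ≤ Cg * q ^ E := by
              apply mul_le_mul_of_nonneg_left _ hCg.le
              exact pow_le_pow_of_le_one hq0.le hq1.le hexpE1
            have hb2 : (t:ℝ) * (2 * q ^ m) ^ (t-1) * (Cf * q ^ (ℓ+1))
                = (t * 2 ^ (t-1) * Cf) * q ^ E := by
              rw [mul_pow, ← pow_mul, ← hexpE2, pow_add]
              ring
            calc ‖g ((y:ℂ) * Complex.I) - f ((y:ℂ) * Complex.I) ^ t‖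
                ≤ Cg * q ^ (t*ℓ+1) + t * (2 * q ^ m) ^ (t-1) * (Cf * q ^ (ℓ+1)) := by
                  refine le_trans htri (add_le_add hg' hft)
              _ ≤ Cg * q ^ E + (t * 2 ^ (t-1) * Cf) * q ^ E := by rw [hb2]; linarith
              _ = K1 * q ^ E := by rw [hK1]; ring
          -- combine
          have hlow2 : CH * (1/(8*q)) ^ dH * (q/2) ^ (t*ℓ)
              ≤ ‖H.eval (jinv ((y:ℂ) * Complex.I))‖
                * ‖Disc ((y:ℂ) * Complex.I)‖ ^ (t*ℓ) := by
            apply mul_le_mul _ (pow_le_pow_left₀ (by positivity) hDisc1 _)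
              (by positivity) (norm_nonneg _)
            calc CH * (1/(8*q)) ^ dH ≤ CH * ‖jinv ((y:ℂ) * Complex.I)‖ ^ dH := by
                  apply mul_le_mul_of_nonneg_left _ hCH.le
                  exact pow_le_pow_left₀ (by positivity) hjlow _
              _ ≤ _ := hHlowy
          have hcomb : CH * (1/(8*q)) ^ dH * (q/2) ^ (t*ℓ) ≤ K1 * q ^ E := by
            refine le_trans hlow2 ?_
            rw [hnormid]
            exact hgf
          have hmul := mul_le_mul_of_nonneg_right hcomb
            (show (0:ℝ) ≤ 8 ^ dH * q ^ dH * 2 ^ (t*ℓ) by positivity)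
          have hmulid : CH * (1/(8*q)) ^ dH * (q/2) ^ (t*ℓ) * (8 ^ dH * q ^ dH * 2 ^ (t*ℓ))
              = CH * q ^ (t*ℓ) := by
            rw [div_pow, div_pow, one_pow, mul_pow]
            field_simp
          have hrhs : K1 * q ^ E * (8 ^ dH * q ^ dH * 2 ^ (t*ℓ)) = K * q ^ (E + dH) := by
            rw [hK, pow_add]
            ring
          rw [hmulid, hrhs] at hmul
          have hEdH : t * ℓ + 1 ≤ E + dH := by omega
          have e3 : q ^ (E + dH) = q * q ^ (E + dH - 1) := by
            rw [← pow_succ']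
            congr 1
            omega
          have e4 : q ^ (E + dH - 1) ≤ q ^ (t*ℓ) :=
            pow_le_pow_of_le_one hq0.le hq1.le (by omega)
          have hfin2 : CH * q ^ (E + dH - 1) ≤ (K * q) * q ^ (E + dH - 1) := by
            calc CH * q ^ (E + dH - 1) ≤ CH * q ^ (t*ℓ) :=
                  mul_le_mul_of_nonneg_left e4 hCH.le
              _ ≤ K * q ^ (E + dH) := hmul
              _ = (K * q) * q ^ (E + dH - 1) := by rw [e3]; ring
          exact le_of_mul_le_mul_right hfin2 (pow_pos hq0 _)
        have hsmall : ∀ᶠ y : ℝ in atTop, K * Qr y < CH := by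
          have h1 : Tendsto (fun y => K * Qr y) atTop (𝓝 (K * 0)) := Qr_tendsto.const_mul K
          rw [mul_zero] at h1
          exact h1.eventually_lt_const hCH
        obtain ⟨y, h1, h2⟩ := (hfinal.and hsmall).exists
        linarith
      intro i hi
      have hHic : H.coeff (G.natDegree - i) = 0 := by
        apply Polynomial.coeff_eq_zero_of_natDegree_lt
        rw [hGD]
        omega
      rw [hH, Polynomial.coeff_sub, sub_eq_zero] at hHic
      exact hHic
  have hps := powerSumRoots_eq_of_coeff G (F ^ t) hGmon hFtmon (by rw [hGD, hFtD])
      (show n ≤ G.natDegree by rw [hGD]; omega) claim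
  rw [hps, powerSumRoots, Polynomial.roots_pow, Multiset.map_nsmul, Multiset.sum_nsmul,
    nsmul_eq_mul, powerSumRoots]
end
end
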